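/- The following are equivalent for a trajectory set S: (1) Ī(f) = σ̄(f) for every financial position f: S → [0,∞]; (2) Ī(f) = σ̄(f) for every real-valued nonnegative financial position f of finite maturity; (3) (LOP) holds together with König's continuity condition (K): I(f) + Ī(f⁻) ≤ Ī(f⁺) for every f ∈ E. Moreover, each of these conditions implies Leinert's condition (L): σ̄(0) ≥ 0. -/

import Mathlib

open Filter
open scoped ENNReal

noncomputable section

/-- A simple portfolio: an initial endowment `V`, a maturity `n`, and
nonanticipating position functions `H i`. -/
structure SimplePortfolio where
  V : ℝ
  n : ℕ
  H : ℕ → (ℕ → ℝ) → ℝ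
  nonanticipating : ∀ i, ∀ S S' : ℕ → ℝ, (∀ k, k ≤ i → S k = S' k) → H i S = H i S'

namespace SimplePortfolio

/-- Wealth process at time `j`. -/
def wealthAt (P : SimplePortfolio) (j : ℕ) (S : ℕ → ℝ) : ℝ :=
  P.V + ∑ i ∈ Finset.range (min j P.n), P.H i S * (S (i + 1) - S i)

/-- Terminal wealth `Π_∞`. -/
def wealth (P : SimplePortfolio) (S : ℕ → ℝ) : ℝ :=
  P.V + ∑ i ∈ Finset.range P.n, P.H i S * (S (i + 1) - S i)

/-- A positive simple portfolio relative to the trajectory set `𝒮`. -/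
def Positive (𝒮 : Set (ℕ → ℝ)) (P : SimplePortfolio) : Prop :=
  0 ≤ P.V ∧ ∀ S ∈ 𝒮, 0 ≤ P.wealth S

end SimplePortfolio

/-- A generalized portfolio: a sequence of simple portfolios, positive for `m ≥ 1`. -/
def IsGenPortfolio (𝒮 : Set (ℕ → ℝ)) (P : ℕ → SimplePortfolio) : Prop :=
  ∀ m, 1 ≤ m → (P m).Positive 𝒮

/-- Total terminal wealth of a generalized portfolio, valued in `(-∞, +∞]`. -/
def totalWealth (P : ℕ → SimplePortfolio) (S : ℕ → ℝ) : EReal :=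
  ((P 0).wealth S : EReal) + ((∑' m, ENNReal.ofReal ((P (m + 1)).wealth S) : ℝ≥0∞) : EReal)

/-- Total initial endowment of a generalized portfolio, valued in `(-∞, +∞]`. -/
def totalEndow (P : ℕ → SimplePortfolio) : EReal :=
  ((P 0).V : EReal) + ((∑' m, ENNReal.ofReal ((P (m + 1)).V) : ℝ≥0∞) : EReal)

/-- The superhedging operator `σ̄` using generalized portfolios. -/
def sigmaBar (𝒮 : Set (ℕ → ℝ)) (f : (ℕ → ℝ) → EReal) : EReal :=
  sInf {c : EReal | ∃ P : ℕ → SimplePortfolio, IsGenPortfolio 𝒮 P ∧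
    (∀ S ∈ 𝒮, f S ≤ totalWealth P S) ∧ c = totalEndow P}

/-- The superhedging operator `Ī` using positive generalized portfolios. -/
def IBar (𝒮 : Set (ℕ → ℝ)) (f : (ℕ → ℝ) → EReal) : EReal :=
  sInf {c : EReal | ∃ P : ℕ → SimplePortfolio, (∀ m, (P m).Positive 𝒮) ∧
    (∀ S ∈ 𝒮, f S ≤ ((∑' m, ENNReal.ofReal ((P m).wealth S) : ℝ≥0∞) : EReal)) ∧
    c = ((∑' m, ENNReal.ofReal ((P m).V) : ℝ≥0∞) : EReal)}

/-- The trajectory-wise Law of One Price (LOP). -/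
def LOP (𝒮 : Set (ℕ → ℝ)) : Prop :=
  ∀ P Q : SimplePortfolio, (∀ S ∈ 𝒮, P.wealth S = Q.wealth S) → P.V = Q.V

/-- Positivity of the elementary hedging functional `I`:
any simple portfolio whose terminal wealth is nonnegative on `𝒮` (i.e. an element of `E⁺`)
has nonnegative initial endowment (price). -/
def IPos (𝒮 : Set (ℕ → ℝ)) : Prop :=
  ∀ P : SimplePortfolio, (∀ S ∈ 𝒮, 0 ≤ P.wealth S) → 0 ≤ P.V

/-- Leinert's condition (L): `σ̄(0) ≥ 0`. -/
def LeinertCond (𝒮 : Set (ℕ → ℝ)) : Prop := 0 ≤ sigmaBar 𝒮 (fun _ => 0)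

/-- König's condition (K): `I(f) + Ī(f⁻) ≤ Ī(f⁺)` for all `f ∈ E`. -/
def KoenigCond (𝒮 : Set (ℕ → ℝ)) : Prop :=
  ∀ P : SimplePortfolio,
    (P.V : EReal) + IBar 𝒮 (fun S => ((max (-(P.wealth S)) 0 : ℝ) : EReal))
      ≤ IBar 𝒮 (fun S => ((max (P.wealth S) 0 : ℝ) : EReal))

/-- The seminorm `‖f‖ = Ī(|f|)`. -/
def pnorm (𝒮 : Set (ℕ → ℝ)) (f : (ℕ → ℝ) → ℝ) : EReal :=
  IBar 𝒮 (fun S => ((|f S| : ℝ) : EReal))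

/-- Null sets with respect to the seminorm `‖·‖`. -/
def NullSet (𝒮 : Set (ℕ → ℝ)) (A : Set (ℕ → ℝ)) : Prop :=
  IBar 𝒮 (A.indicator fun _ => (1 : EReal)) = 0

/-- The shifted conditional space `𝒮^{(S,j)}`. -/
def shiftedSpace (𝒮 : Set (ℕ → ℝ)) (S : ℕ → ℝ) (j : ℕ) : Set (ℕ → ℝ) :=
  {T | ∃ S' ∈ 𝒮, (∀ i, i ≤ j → S' i = S i) ∧ ∀ i, T i = S' (j + i)}

/-- Leinert's condition at every node (nL). -/
def NodewiseL (𝒮 : Set (ℕ → ℝ)) : Prop :=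
  ∀ S ∈ 𝒮, ∀ j : ℕ, LeinertCond (shiftedSpace 𝒮 S j)

/-- König's condition (together with (LOP)) at every node (nK). -/
def NodewiseK (𝒮 : Set (ℕ → ℝ)) : Prop :=
  ∀ S ∈ 𝒮, ∀ j : ℕ, LOP (shiftedSpace 𝒮 S j) ∧ KoenigCond (shiftedSpace 𝒮 S j)

/-- `S'` agrees with `S` up to time `j`. -/
def agreesUpTo (S S' : ℕ → ℝ) (j : ℕ) : Prop := ∀ i, i ≤ j → S' i = S i

/-- The node `𝒮_{(S,j)}` is flat. -/
def FlatNode (𝒮 : Set (ℕ → ℝ)) (S : ℕ → ℝ) (j : ℕ) : Prop :=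
  ∀ S' ∈ 𝒮, agreesUpTo S S' j → S' (j + 1) = S j

/-- The node `𝒮_{(S,j)}` is an arbitrage node. -/
def ArbNode (𝒮 : Set (ℕ → ℝ)) (S : ℕ → ℝ) (j : ℕ) : Prop :=
  ∃ ε : ℝ, (ε = 1 ∨ ε = -1) ∧
    (∀ S' ∈ 𝒮, agreesUpTo S S' j → 0 ≤ ε * (S' (j + 1) - S j)) ∧
    ∃ S' ∈ 𝒮, agreesUpTo S S' j ∧ 0 < ε * (S' (j + 1) - S j)

/-- Arbitrage node of type I. -/
def TypeINode (𝒮 : Set (ℕ → ℝ)) (S : ℕ → ℝ) (j : ℕ) : Prop :=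
  ArbNode 𝒮 S j ∧ ∃ S' ∈ 𝒮, agreesUpTo S S' j ∧ S' (j + 1) = S j

/-- Arbitrage node of type II. -/
def TypeIINode (𝒮 : Set (ℕ → ℝ)) (S : ℕ → ℝ) (j : ℕ) : Prop :=
  ArbNode 𝒮 S j ∧ ¬ ∃ S' ∈ 𝒮, agreesUpTo S S' j ∧ S' (j + 1) = S j

/-- Up-down node: neither flat nor an arbitrage node. -/
def UpDownNode (𝒮 : Set (ℕ → ℝ)) (S : ℕ → ℝ) (j : ℕ) : Prop :=
  ¬ FlatNode 𝒮 S j ∧ ¬ ArbNode 𝒮 S j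

/-- The set `N` of trajectories moving at a type I arbitrage node. -/
def NSet (𝒮 : Set (ℕ → ℝ)) : Set (ℕ → ℝ) :=
  {S | S ∈ 𝒮 ∧ ∃ j : ℕ, TypeINode 𝒮 S j ∧ S (j + 1) ≠ S j}

/-- The set `N_n` of trajectories moving at a type I arbitrage node before time `n`. -/
def NSetUpTo (𝒮 : Set (ℕ → ℝ)) (n : ℕ) : Set (ℕ → ℝ) :=
  {S | S ∈ 𝒮 ∧ ∃ j < n, TypeINode 𝒮 S j ∧ S (j + 1) ≠ S j}

/-- Membership in `L¹_(L)`: `f` has finite norm and is a `‖·‖`-limit of elements of `E'`. -/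
def MemL1L (𝒮 : Set (ℕ → ℝ)) (f : (ℕ → ℝ) → ℝ) : Prop :=
  pnorm 𝒮 f < ⊤ ∧
  ∃ P : ℕ → SimplePortfolio, (∀ m, pnorm 𝒮 ((P m).wealth) < ⊤) ∧
    Tendsto (fun m => pnorm 𝒮 (fun S => f S - (P m).wealth S)) atTop (nhds 0)

/-- Membership in `L¹_(K)`: the outer and inner integrals agree and are finite. -/
def MemL1K (𝒮 : Set (ℕ → ℝ)) (f : (ℕ → ℝ) → ℝ) : Prop :=
  ∃ c : ℝ, sigmaBar 𝒮 (fun S => ((f S : ℝ) : EReal)) = (c : EReal) ∧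
    sigmaBar 𝒮 (fun S => ((-f S : ℝ) : EReal)) = ((-c : ℝ) : EReal)

/-- `f` has finite maturity: it depends only on an initial segment of the trajectory. -/
def FiniteMaturity (𝒮 : Set (ℕ → ℝ)) (f : (ℕ → ℝ) → ℝ) : Prop :=
  ∃ n : ℕ, ∀ S ∈ 𝒮, ∀ S' ∈ 𝒮, (∀ i, i ≤ n → S i = S' i) → f S = f S'

namespace Aux

open SimplePortfolio

/-- zero portfolio -/
def zeroP : SimplePortfolio := ⟨0, 0, fun _ _ => 0, fun _ _ _ _ => rfl⟩

@[simp] lemma zeroP_wealth (S : ℕ → ℝ) : zeroP.wealth S = 0 := by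
  simp [zeroP, wealth]

lemma zeroP_pos (𝒮 : Set (ℕ → ℝ)) : zeroP.Positive 𝒮 :=
  ⟨le_refl 0, fun S _ => by simp⟩

/-- addition of simple portfolios -/
def addP (P Q : SimplePortfolio) : SimplePortfolio where
  V := P.V + Q.V
  n := max P.n Q.n
  H := fun i S => (if i < P.n then P.H i S else 0) + (if i < Q.n then Q.H i S else 0)
  nonanticipating := by
    intro i S S' h
    rw [P.nonanticipating i S S' h, Q.nonanticipating i S S' h]

lemma trunc_sum (P : SimplePortfolio) (S : ℕ → ℝ) (N : ℕ) (hN : P.n ≤ N) :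
    ∑ i ∈ Finset.range N, (if i < P.n then P.H i S else 0) * (S (i + 1) - S i)
      = ∑ i ∈ Finset.range P.n, P.H i S * (S (i + 1) - S i) := by
  rw [← Finset.sum_subset (Finset.range_subset_range.2 hN)]
  · apply Finset.sum_congr rfl
    intro i hi
    rw [if_pos (Finset.mem_range.1 hi)]
  · intro i _ hi
    rw [if_neg (fun h => hi (Finset.mem_range.2 h)), zero_mul]

lemma addP_wealth (P Q : SimplePortfolio) (S : ℕ → ℝ) :
    (addP P Q).wealth S = P.wealth S + Q.wealth S := by
  simp only [wealth, addP, add_mul, Finset.sum_add_distrib]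
  rw [trunc_sum P S _ (le_max_left _ _), trunc_sum Q S _ (le_max_right _ _)]
  ring

/-- negation of a simple portfolio -/
def negP (P : SimplePortfolio) : SimplePortfolio where
  V := -P.V
  n := P.n
  H := fun i S => -(P.H i S)
  nonanticipating := by
    intro i S S' h; rw [P.nonanticipating i S S' h]

lemma negP_wealth (P : SimplePortfolio) (S : ℕ → ℝ) :
    (negP P).wealth S = -(P.wealth S) := by
  simp only [wealth, negP, neg_add, ← Finset.sum_neg_distrib]
  congr 1
  apply Finset.sum_congr rfl; intro i _; ring

/-- finite partial sums of a sequence of portfolios -/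
def sumP (P : ℕ → SimplePortfolio) : ℕ → SimplePortfolio
  | 0 => P 0
  | (k+1) => addP (sumP P k) (P (k+1))

lemma sumP_wealth (P : ℕ → SimplePortfolio) (k : ℕ) (S : ℕ → ℝ) :
    (sumP P k).wealth S = ∑ m ∈ Finset.range (k+1), (P m).wealth S := by
  induction k with
  | zero => simp [sumP]
  | succ k ih =>
      rw [sumP, addP_wealth, ih, Finset.sum_range_succ, Finset.sum_range_succ,
        Finset.sum_range_succ]

lemma sumP_V (P : ℕ → SimplePortfolio) (k : ℕ) :
    (sumP P k).V = ∑ m ∈ Finset.range (k+1), (P m).V := by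
  induction k with
  | zero => simp [sumP]
  | succ k ih =>
      show (sumP P k).V + (P (k+1)).V = _
      rw [ih, Finset.sum_range_succ, Finset.sum_range_succ, Finset.sum_range_succ]

/-- wealth only depends on the first `n+1` values -/
lemma wealth_congr (P : SimplePortfolio) (S S' : ℕ → ℝ) (h : ∀ i, i ≤ P.n → S i = S' i) :
    P.wealth S = P.wealth S' := by
  unfold wealth
  congr 1
  apply Finset.sum_congr rfl
  intro i hi
  have hi' := Finset.mem_range.1 hi
  rw [P.nonanticipating i S S' (fun k hk => h k (le_trans hk (le_of_lt hi'))),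
    h (i+1) hi', h i (le_of_lt hi')]

end Aux
namespace Aux

open SimplePortfolio

lemma enn_coe_ofReal_of_nonneg {a : ℝ} (ha : 0 ≤ a) :
    ((ENNReal.ofReal a : ℝ≥0∞) : EReal) = (a : EReal) := by
  rw [EReal.coe_ennreal_ofReal, max_eq_left ha]

lemma IBar_nonneg (𝒮 : Set (ℕ → ℝ)) (f : (ℕ → ℝ) → EReal) : 0 ≤ IBar 𝒮 f := by
  apply le_sInf
  rintro c ⟨P, _, _, rfl⟩
  exact EReal.coe_ennreal_nonneg _

lemma sigmaBar_le_IBar (𝒮 : Set (ℕ → ℝ)) (f : (ℕ → ℝ) → EReal) :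
    sigmaBar 𝒮 f ≤ IBar 𝒮 f := by
  apply sInf_le_sInf
  rintro c ⟨P, hpos, hhedge, rfl⟩
  refine ⟨P, fun m _ => hpos m, fun S hS => ?_, ?_⟩
  · refine le_trans (hhedge S hS) (le_of_eq ?_)
    rw [tsum_eq_zero_add' ENNReal.summable, EReal.coe_ennreal_add,
      enn_coe_ofReal_of_nonneg ((hpos 0).2 S hS)]
    rfl
  · rw [totalEndow, tsum_eq_zero_add' (f := fun m => ENNReal.ofReal ((P m).V)) ENNReal.summable,
      EReal.coe_ennreal_add, enn_coe_ofReal_of_nonneg (hpos 0).1]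

end Aux
namespace Aux

open SimplePortfolio

/-- splitting an ENNReal tsum at `k` -/
lemma enn_split (g : ℕ → ℝ≥0∞) (k : ℕ) :
    ∑' m, g m = (∑ m ∈ Finset.range k, g m) + ∑' m, g (m + k) := by
  induction k with
  | zero => simp
  | succ k ih =>
      have h1 : ∑' m, g (m + k) = g k + ∑' m, g (m + (k + 1)) := by
        rw [tsum_eq_zero_add' (f := fun m => g (m + k)) ENNReal.summable]
        congr 1
        · rw [zero_add]
        · exact tsum_congr fun m => by congr 1; omega
      rw [ih, h1, Finset.sum_range_succ, add_assoc]

lemma max_neg_le_of (a : ℝ) (t : ℝ≥0∞) (h : (0:EReal) ≤ (a : EReal) + (t : EReal)) :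
    ((max (-a) 0 : ℝ) : EReal) ≤ (t : EReal) := by
  rcases eq_or_ne t ⊤ with rfl | ht
  · simp
  · lift t to NNReal using ht
    rw [EReal.coe_nnreal_eq_coe_real] at h ⊢
    rw [← EReal.coe_add] at h
    rw [EReal.coe_le_coe_iff]
    have h' : (0:ℝ) ≤ a + t := by exact_mod_cast h
    exact max_le (by linarith) t.2

/-- The set of trajectories form a Leinert-style family: LOP from statement (2). -/
lemma lop_of_two (𝒮 : Set (ℕ → ℝ))
    (h2 : ∀ f : (ℕ → ℝ) → ℝ, (∀ S ∈ 𝒮, 0 ≤ f S) → FiniteMaturity 𝒮 f →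
      IBar 𝒮 (fun S => ((f S : ℝ) : EReal)) = sigmaBar 𝒮 (fun S => ((f S : ℝ) : EReal))) :
    LOP 𝒮 := by
  have hzero : (0:EReal) ≤ sigmaBar 𝒮 (fun _ => ((0:ℝ) : EReal)) := by
    rw [← h2 (fun _ => (0:ℝ)) (fun S _ => le_refl 0) ⟨0, fun _ _ _ _ _ => rfl⟩]
    exact IBar_nonneg 𝒮 _
  have key : ∀ P Q : SimplePortfolio, (∀ S ∈ 𝒮, P.wealth S = Q.wealth S) → 0 ≤ Q.V - P.V := by
    intro P Q hPQ
    set D := addP Q (negP P) with hD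
    have hDw : ∀ S ∈ 𝒮, D.wealth S = 0 := by
      intro S hS
      rw [hD, addP_wealth, negP_wealth, hPQ S hS]
      ring
    set R : ℕ → SimplePortfolio := fun m => match m with | 0 => D | (_+1) => zeroP with hR
    have hle : sigmaBar 𝒮 (fun _ => ((0:ℝ) : EReal)) ≤ totalEndow R := by
      apply sInf_le
      refine ⟨R, ?_, ?_, rfl⟩
      · rintro (_|m) hm
        · omega
        · exact zeroP_pos 𝒮
      · intro S hS
        show ((0:ℝ):EReal) ≤ (D.wealth S : EReal) + _
        rw [hDw S hS]
        simp only [EReal.coe_zero, zero_add]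
        exact le_trans (by norm_num) (EReal.coe_ennreal_nonneg _)
    have hend : totalEndow R = ((Q.V - P.V : ℝ) : EReal) := by
      show (D.V : EReal) + _ = _
      have : (∑' (_ : ℕ), ENNReal.ofReal (zeroP.V)) = 0 := by simp [zeroP]
      rw [this]
      have hDV : D.V = Q.V - P.V := by show Q.V + (-P.V) = _; ring
      simp [hDV]
    have := le_trans hzero (hend ▸ hle)
    exact_mod_cast this
  intro P Q h
  have h1 := key P Q h
  have h2' := key Q P (fun S hS => (h S hS).symm)
  linarith

lemma koenig_of_two (𝒮 : Set (ℕ → ℝ))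
    (h2 : ∀ f : (ℕ → ℝ) → ℝ, (∀ S ∈ 𝒮, 0 ≤ f S) → FiniteMaturity 𝒮 f →
      IBar 𝒮 (fun S => ((f S : ℝ) : EReal)) = sigmaBar 𝒮 (fun S => ((f S : ℝ) : EReal))) :
    KoenigCond 𝒮 := by
  intro P
  have hfm : ∀ g : ℝ → ℝ, FiniteMaturity 𝒮 (fun S => g (P.wealth S)) :=
    fun g => ⟨P.n, fun S _ S' _ hag => by show g (P.wealth S) = g (P.wealth S'); rw [wealth_congr P S S' hag]⟩
  have eqp : IBar 𝒮 (fun S => ((max (P.wealth S) 0 : ℝ) : EReal))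
      = sigmaBar 𝒮 (fun S => ((max (P.wealth S) 0 : ℝ) : EReal)) :=
    h2 (fun S => max (P.wealth S) 0) (fun S _ => le_max_right _ _) (hfm (fun x => max x 0))
  have eqm : IBar 𝒮 (fun S => ((max (-(P.wealth S)) 0 : ℝ) : EReal))
      = sigmaBar 𝒮 (fun S => ((max (-(P.wealth S)) 0 : ℝ) : EReal)) :=
    h2 (fun S => max (-(P.wealth S)) 0) (fun S _ => le_max_right _ _) (hfm (fun x => max (-x) 0))
  rw [eqp, eqm]
  apply le_sInf
  rintro c ⟨Q, hgen, hhedge, rfl⟩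
  set Q' : ℕ → SimplePortfolio := fun m => match m with
    | 0 => addP (Q 0) (negP P)
    | (k+1) => Q (k+1) with hQ'
  have hmem : sigmaBar 𝒮 (fun S => ((max (-(P.wealth S)) 0 : ℝ) : EReal)) ≤ totalEndow Q' := by
    apply sInf_le
    refine ⟨Q', ?_, ?_, rfl⟩
    · rintro (_|m) hm
      · omega
      · exact hgen (m+1) (by omega)
    · intro S hS
      have hh := hhedge S hS
      show ((max (-(P.wealth S)) 0 : ℝ) : EReal) ≤ ((addP (Q 0) (negP P)).wealth S : EReal) + _
      rw [addP_wealth, negP_wealth]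
      have hmax : (max (-(P.wealth S)) 0 : ℝ) = (max (P.wealth S) 0) + (-(P.wealth S)) := by
        rcases le_total (P.wealth S) 0 with h | h
        · rw [max_eq_left (by linarith), max_eq_right h]; ring
        · rw [max_eq_right (by linarith), max_eq_left h]; ring
      rw [hmax, EReal.coe_add, EReal.coe_add]
      calc ((max (P.wealth S) 0 : ℝ) : EReal) + ((-(P.wealth S) : ℝ) : EReal)
          ≤ (((Q 0).wealth S : EReal) + _) + ((-(P.wealth S) : ℝ) : EReal) :=
            add_le_add_left hh _
        _ = (((Q 0).wealth S : EReal) + ((-(P.wealth S) : ℝ) : EReal)) + _ := by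
            rw [add_right_comm]
        _ = _ := by rw [← EReal.coe_add]
  refine le_trans (add_le_add_right hmem _) (le_of_eq ?_)
  show (P.V : EReal) + (((addP (Q 0) (negP P)).V : EReal) + _) = ((Q 0).V : EReal) + _
  rw [← add_assoc, ← EReal.coe_add]
  congr 2
  show P.V + ((Q 0).V + -P.V) = (Q 0).V
  ring

end Aux
namespace Aux

open SimplePortfolio

lemma le_coe_of_forall_add {x : EReal} {r : ℝ}
    (h : ∀ δ : ℝ, 0 < δ → x ≤ ((r + δ : ℝ) : EReal)) : x ≤ (r : EReal) := by
  by_contra hc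
  obtain ⟨y, hy1, hy2⟩ := EReal.exists_between_coe_real (lt_of_not_ge hc)
  have hd : 0 < y - r := by
    have := EReal.coe_lt_coe_iff.1 hy1; linarith
  have hxy := h (y - r) hd
  rw [show r + (y - r) = y by ring] at hxy
  exact absurd (lt_of_le_of_lt hxy hy2) (lt_irrefl x)

lemma one_of_koenig (𝒮 : Set (ℕ → ℝ)) (hK : KoenigCond 𝒮) :
    ∀ f : (ℕ → ℝ) → EReal, (∀ S ∈ 𝒮, 0 ≤ f S) → IBar 𝒮 f = sigmaBar 𝒮 f := by
  intro f hf
  refine le_antisymm ?_ (sigmaBar_le_IBar 𝒮 f)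
  apply le_sInf
  rintro c ⟨P, hgen, hhedge, rfl⟩
  show IBar 𝒮 f ≤ ((P 0).V : EReal) + ((∑' m, ENNReal.ofReal ((P (m+1)).V) : ℝ≥0∞) : EReal)
  rcases eq_or_ne (∑' m, ENNReal.ofReal ((P (m+1)).V)) ⊤ with hT | hT
  · rw [hT, EReal.coe_ennreal_top, EReal.coe_add_top]
    exact le_top
  obtain ⟨ρ, hρ⟩ : ∃ ρ : NNReal, (∑' m, ENNReal.ofReal ((P (m+1)).V)) = (ρ : ℝ≥0∞) :=
    ⟨_, (ENNReal.coe_toNNReal hT).symm⟩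
  rw [hρ, EReal.coe_nnreal_eq_coe_real, ← EReal.coe_add]
  apply le_coe_of_forall_add
  intro δ hδ
  -- choose k with a small tail
  have htend := ENNReal.tendsto_sum_nat_add (fun m => ENNReal.ofReal ((P (m+1)).V)) hT
  have hev : ∀ᶠ i in atTop,
      (∑' m, ENNReal.ofReal ((P (m + i + 1)).V)) < ENNReal.ofReal (δ/3) :=
    htend.eventually_lt_const (ENNReal.ofReal_pos.2 (by linarith))
  obtain ⟨k, hk⟩ := hev.exists
  -- the tail of the endowments is a real number τ ≤ δ/3
  obtain ⟨τ, hτ⟩ : ∃ τ : NNReal, (∑' m, ENNReal.ofReal ((P (m + k + 1)).V)) = (τ : ℝ≥0∞) :=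
    ⟨_, (ENNReal.coe_toNNReal (ne_top_of_lt hk)).symm⟩
  have hτδ : (τ:ℝ) ≤ δ/3 := by
    rw [hτ] at hk
    rw [← ENNReal.ofReal_coe_nnreal] at hk
    exact le_of_lt ((ENNReal.ofReal_lt_ofReal_iff_of_nonneg τ.2).1 hk)
  -- Step A : pointwise decomposition  f ≤ Π(sumP P k) + tail
  have stepA : ∀ S ∈ 𝒮, f S ≤ (((sumP P k).wealth S : ℝ) : EReal)
      + ((∑' m, ENNReal.ofReal ((P (m+k+1)).wealth S) : ℝ≥0∞) : EReal) := by
    intro S hS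
    refine le_trans (hhedge S hS) ?_
    show ((P 0).wealth S : EReal) + _ ≤ _
    have hsplit : (∑' m, ENNReal.ofReal ((P (m+1)).wealth S))
        = (∑ m ∈ Finset.range k, ENNReal.ofReal ((P (m+1)).wealth S))
          + ∑' m, ENNReal.ofReal ((P (m+k+1)).wealth S) :=
      enn_split (fun m => ENNReal.ofReal ((P (m+1)).wealth S)) k
    rw [hsplit, EReal.coe_ennreal_add, ← add_assoc]
    apply add_le_add_left
    have hnn : ∀ i ∈ Finset.range k, (0:ℝ) ≤ (P (i+1)).wealth S :=
      fun i _ => (hgen (i+1) (by omega)).2 S hS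
    have hsum : (∑ m ∈ Finset.range k, ENNReal.ofReal ((P (m+1)).wealth S))
        = ENNReal.ofReal (∑ m ∈ Finset.range k, (P (m+1)).wealth S) :=
      (ENNReal.ofReal_sum_of_nonneg hnn).symm
    rw [hsum, enn_coe_ofReal_of_nonneg (Finset.sum_nonneg hnn), ← EReal.coe_add]
    apply le_of_eq
    exact EReal.coe_eq_coe_iff.2 (by rw [sumP_wealth, Finset.sum_range_succ']; ring)
  -- Step B : the negative part of Π(sumP P k) is superhedged by the tail portfolios
  have stepB : IBar 𝒮 (fun S => ((max (-((sumP P k).wealth S)) 0 : ℝ) : EReal))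
      ≤ ((∑' m, ENNReal.ofReal ((P (m+k+1)).V) : ℝ≥0∞) : EReal) := by
    apply sInf_le
    refine ⟨fun m => P (m+k+1), fun m => hgen (m+k+1) (by omega), ?_, rfl⟩
    intro S hS
    exact max_neg_le_of _ _ (le_trans (hf S hS) (stepA S hS))
  -- Step C : reverse Koenig at sumP P k
  have hKQ := hK (negP (sumP P k))
  have e1 : (fun S => ((max (-((negP (sumP P k)).wealth S)) 0 : ℝ) : EReal))
      = fun S => ((max ((sumP P k).wealth S) 0 : ℝ) : EReal) := by
    funext S; rw [negP_wealth, neg_neg]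
  have e2 : (fun S => ((max ((negP (sumP P k)).wealth S) 0 : ℝ) : EReal))
      = fun S => ((max (-((sumP P k).wealth S)) 0 : ℝ) : EReal) := by
    funext S; rw [negP_wealth]
  rw [e1, e2] at hKQ
  have stepC : IBar 𝒮 (fun S => ((max ((sumP P k).wealth S) 0 : ℝ) : EReal))
      ≤ (((sumP P k).V : ℝ) : EReal)
        + IBar 𝒮 (fun S => ((max (-((sumP P k).wealth S)) 0 : ℝ) : EReal)) := by
    have h' := add_le_add_right hKQ (((sumP P k).V : ℝ) : EReal)
    rw [← add_assoc] at h'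
    have hzz : (((sumP P k).V : ℝ) : EReal) + ((negP (sumP P k)).V : EReal) = (0 : EReal) := by
      show _ + ((-(sumP P k).V : ℝ) : EReal) = _
      rw [← EReal.coe_add]
      norm_num
    rw [hzz, zero_add] at h'
    exact h'
  have stepCB : IBar 𝒮 (fun S => ((max ((sumP P k).wealth S) 0 : ℝ) : EReal))
      ≤ (((sumP P k).V + (τ:ℝ) : ℝ) : EReal) := by
    refine le_trans stepC (le_trans (add_le_add_right stepB _) (le_of_eq ?_))
    rw [hτ, EReal.coe_nnreal_eq_coe_real, ← EReal.coe_add]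
  -- bound on the endowment of sumP P k
  have hVQ : (sumP P k).V ≤ (P 0).V + (ρ:ℝ) := by
    rw [sumP_V, Finset.sum_range_succ']
    have hnn : ∀ i ∈ Finset.range k, (0:ℝ) ≤ (P (i+1)).V := fun i _ => (hgen (i+1) (by omega)).1
    have h1 : ENNReal.ofReal (∑ m ∈ Finset.range k, (P (m+1)).V)
        = ∑ m ∈ Finset.range k, ENNReal.ofReal ((P (m+1)).V) :=
      ENNReal.ofReal_sum_of_nonneg hnn
    have h2 : (∑ m ∈ Finset.range k, ENNReal.ofReal ((P (m+1)).V)) ≤ (ρ : ℝ≥0∞) := by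
      rw [← hρ]; exact ENNReal.sum_le_tsum _
    rw [← h1, ← ENNReal.ofReal_coe_nnreal] at h2
    have hle := (ENNReal.ofReal_le_ofReal_iff ρ.2).1 h2
    rw [add_comm]
    exact add_le_add_right hle _
  -- pick a near-optimal superhedge A of the positive part
  have hQlt : IBar 𝒮 (fun S => ((max ((sumP P k).wealth S) 0 : ℝ) : EReal))
      < (((sumP P k).V + (τ:ℝ) + δ/3 : ℝ) : EReal) :=
    lt_of_le_of_lt stepCB (EReal.coe_lt_coe_iff.2 (by linarith))
  obtain ⟨cA, hcA_mem, hcA_lt⟩ := sInf_lt_iff.1 hQlt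
  obtain ⟨A, hApos, hAhedge, rfl⟩ := hcA_mem
  -- interleave A with the tail portfolios
  set R : ℕ → SimplePortfolio :=
    fun m => if m % 2 = 0 then A (m/2) else P (m/2 + k + 1) with hR
  have hinter : ∀ g : SimplePortfolio → ℝ≥0∞,
      (∑' m, g (R m)) = (∑' m, g (A m)) + ∑' m, g (P (m + k + 1)) := by
    intro g
    rw [← tsum_even_add_odd (f := fun m => g (R m)) ENNReal.summable ENNReal.summable]
    congr 1
    · refine tsum_congr fun m => ?_
      simp only [hR]
      rw [if_pos (by omega : (2*m) % 2 = 0), (by omega : 2*m/2 = m)]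
    · refine tsum_congr fun m => ?_
      simp only [hR]
      rw [if_neg (by omega : ¬ (2*m+1) % 2 = 0), (by omega : (2*m+1)/2 = m)]
  have hmemf : IBar 𝒮 f ≤ ((∑' m, ENNReal.ofReal ((R m).V) : ℝ≥0∞) : EReal) := by
    apply sInf_le
    refine ⟨R, ?_, ?_, rfl⟩
    · intro m
      simp only [hR]
      split_ifs
      · exact hApos _
      · exact hgen _ (by omega)
    · intro S hS
      have h2 := hAhedge S hS
      refine le_trans (stepA S hS) (le_trans (add_le_add_left
        (le_trans (EReal.coe_le_coe_iff.2 (le_max_left _ _)) h2) _) (le_of_eq ?_))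
      have h3 := hinter (fun Q' => ENNReal.ofReal (Q'.wealth S))
      rw [← EReal.coe_ennreal_add, h3]
  refine le_trans hmemf ?_
  have h4 := hinter (fun Q' => ENNReal.ofReal Q'.V)
  rw [h4, EReal.coe_ennreal_add, hτ, EReal.coe_nnreal_eq_coe_real]
  calc ((∑' m, ENNReal.ofReal ((A m).V) : ℝ≥0∞) : EReal) + (((τ:ℝ) : ℝ) : EReal)
      ≤ (((sumP P k).V + (τ:ℝ) + δ/3 : ℝ) : EReal) + (((τ:ℝ) : ℝ) : EReal) :=
        add_le_add_left (le_of_lt hcA_lt) _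
    _ = (((sumP P k).V + (τ:ℝ) + δ/3 + (τ:ℝ) : ℝ) : EReal) := by rw [← EReal.coe_add]
    _ ≤ _ := EReal.coe_le_coe_iff.2 (by linarith)

end Aux
namespace Aux

lemma one_to_two (𝒮 : Set (ℕ → ℝ))
    (h1 : ∀ f : (ℕ → ℝ) → EReal, (∀ S ∈ 𝒮, 0 ≤ f S) → IBar 𝒮 f = sigmaBar 𝒮 f) :
    ∀ f : (ℕ → ℝ) → ℝ, (∀ S ∈ 𝒮, 0 ≤ f S) → FiniteMaturity 𝒮 f →
      IBar 𝒮 (fun S => ((f S : ℝ) : EReal)) = sigmaBar 𝒮 (fun S => ((f S : ℝ) : EReal)) :=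
  fun f hf _ => h1 _ (fun S hS => by exact_mod_cast hf S hS)

end Aux
/-- equivalence of `Ī = σ̄` on all positive positions, `Ī = σ̄` on
real-valued nonnegative positions of finite maturity, and (LOP) together with
König's condition (K); each implies Leinert's condition (L). -/
theorem stmt7 (𝒮 : Set (ℕ → ℝ)) :
    ((∀ f : (ℕ → ℝ) → EReal, (∀ S ∈ 𝒮, 0 ≤ f S) → IBar 𝒮 f = sigmaBar 𝒮 f) ↔
      (∀ f : (ℕ → ℝ) → ℝ, (∀ S ∈ 𝒮, 0 ≤ f S) → FiniteMaturity 𝒮 f →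
        IBar 𝒮 (fun S => ((f S : ℝ) : EReal)) = sigmaBar 𝒮 (fun S => ((f S : ℝ) : EReal)))) ∧
    ((∀ f : (ℕ → ℝ) → EReal, (∀ S ∈ 𝒮, 0 ≤ f S) → IBar 𝒮 f = sigmaBar 𝒮 f) ↔
      (LOP 𝒮 ∧ KoenigCond 𝒮)) ∧
    ((∀ f : (ℕ → ℝ) → EReal, (∀ S ∈ 𝒮, 0 ≤ f S) → IBar 𝒮 f = sigmaBar 𝒮 f) →
      LeinertCond 𝒮) := by
  refine ⟨⟨fun h1 => Aux.one_to_two 𝒮 h1,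
      fun h2 => Aux.one_of_koenig 𝒮 (Aux.koenig_of_two 𝒮 h2)⟩,
    ⟨fun h1 => ⟨Aux.lop_of_two 𝒮 (Aux.one_to_two 𝒮 h1),
        Aux.koenig_of_two 𝒮 (Aux.one_to_two 𝒮 h1)⟩,
      fun h3 => Aux.one_of_koenig 𝒮 h3.2⟩,
    fun h1 => ?_⟩
  unfold LeinertCond
  rw [← h1 (fun _ => 0) (fun _ _ => le_refl 0)]
  exact Aux.IBar_nonneg 𝒮 _
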